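/- Let e(n) = deg B_n(t) be the degree of the n-th Stern polynomial. Then for every natural number n ≥ 1, 36·∑_{i=1}^{2^n} e(i) = (6n - 7)·2^{n+2} + 18n + 27 + (-1)^n. -/

import Mathlib

open Polynomial

/-- The Stern polynomials: `B 0 = 0`, `B 1 = 1`, `B (2n) = t * B n`,
`B (2n+1) = B n + B (n+1)`. -/
noncomputable def stern : ℕ → Polynomial ℤ
  | 0 => 0
  | 1 => 1
  | n + 2 =>
    if _h : n % 2 = 0 then
      X * stern (n / 2 + 1)
    else
      stern (n / 2 + 1) + stern (n / 2 + 2)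
  decreasing_by all_goals omega

/-- `e n` is the degree of the `n`-th Stern polynomial. -/
noncomputable def e (n : ℕ) : ℕ := (stern n).natDegree

lemma stern_two_mul (n : ℕ) (hn : 1 ≤ n) : stern (2 * n) = X * stern n := by
  obtain ⟨k, rfl⟩ : ∃ k, n = k + 1 := ⟨n - 1, by omega⟩
  rw [show 2 * (k + 1) = 2*k + 2 by ring, stern]
  rw [dif_pos (by omega)]
  norm_num [Nat.mul_div_cancel_left]

lemma stern_two_mul_add_one (n : ℕ) (hn : 1 ≤ n) :
    stern (2 * n + 1) = stern n + stern (n + 1) := by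
  obtain ⟨k, rfl⟩ : ∃ k, n = k + 1 := ⟨n - 1, by omega⟩
  rw [show 2 * (k + 1) + 1 = (2*k+1) + 2 by ring, stern]
  rw [dif_neg (by omega), show (2*k+1)/2 = k by omega]

lemma stern_coeff_nonneg (n : ℕ) : ∀ k, 0 ≤ (stern n).coeff k := by
  induction n using Nat.strong_induction_on with
  | _ n ih =>
    match n with
    | 0 => simp [stern]
    | 1 => intro k; rw [stern]; rcases k with _|k <;> simp [coeff_one]
    | n + 2 =>
      intro k
      rw [stern]
      split
      · rcases k with _|k
        · simp [mul_coeff_zero]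
        · rw [coeff_X_mul]; exact ih _ (by omega) k
      · rw [coeff_add]
        exact add_nonneg (ih _ (by omega) k) (ih _ (by omega) k)

lemma stern_eval_one_pos (n : ℕ) (hn : 1 ≤ n) : 0 < (stern n).eval 1 := by
  induction n using Nat.strong_induction_on with
  | _ n ih =>
    match n with
    | 1 => rw [stern]; simp
    | n + 2 =>
      rw [stern]
      split
      · simp only [eval_mul, eval_X, one_mul]
        exact ih _ (by omega) (by omega)
      · rw [eval_add]
        have h1 := ih (n/2+1) (by omega) (by omega)
        have h2 := ih (n/2+2) (by omega) (by omega)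
        linarith

lemma stern_ne_zero (n : ℕ) (hn : 1 ≤ n) : stern n ≠ 0 := by
  intro h
  have := stern_eval_one_pos n hn
  rw [h] at this; simp at this

lemma natDegree_add_of_nonneg (p q : Polynomial ℤ) (hp : p ≠ 0)
    (hpc : ∀ k, 0 ≤ p.coeff k) (hqc : ∀ k, 0 ≤ q.coeff k) :
    (p + q).natDegree = max p.natDegree q.natDegree := by
  rcases lt_trichotomy p.natDegree q.natDegree with h | h | h
  · rw [natDegree_add_eq_right_of_natDegree_lt h, max_eq_right h.le]
  · have hc : (p + q).coeff p.natDegree ≠ 0 := by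
      rw [coeff_add]
      have h1 : p.coeff p.natDegree ≠ 0 := by
        exact mt leadingCoeff_eq_zero.mp hp
      have := hpc p.natDegree
      have := hqc p.natDegree
      omega
    apply le_antisymm
    · exact (natDegree_add_le p q).trans (by omega)
    · calc max p.natDegree q.natDegree = p.natDegree := by omega
        _ ≤ (p+q).natDegree := le_natDegree_of_ne_zero hc
  · rw [natDegree_add_eq_left_of_natDegree_lt h, max_eq_left h.le]

lemma e_zero : e 0 = 0 := by simp [e, stern]

lemma e_one : e 1 = 0 := by simp [e, stern]

lemma e_two_mul (n : ℕ) (hn : 1 ≤ n) : e (2*n) = e n + 1 := by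
  unfold e
  rw [stern_two_mul n hn, natDegree_X_mul (stern_ne_zero n hn)]

lemma e_two_mul_add_one (n : ℕ) (hn : 1 ≤ n) : e (2*n+1) = max (e n) (e (n+1)) := by
  unfold e
  rw [stern_two_mul_add_one n hn,
    natDegree_add_of_nonneg _ _ (stern_ne_zero n hn) (stern_coeff_nonneg n)
      (stern_coeff_nonneg (n+1))]

lemma e_diff (n : ℕ) : 1 ≤ n → e (n+1) ≤ e n + 1 ∧ e n ≤ e (n+1) + 1 := by
  induction n using Nat.strong_induction_on with
  | _ n ih =>
    intro hn
    rcases eq_or_lt_of_le hn with h | h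
    · have h2 : e (1+1) = e 1 + 1 := e_two_mul 1 le_rfl
      rw [← h]
      omega
    · rcases Nat.even_or_odd n with ⟨r, hr⟩ | ⟨r, hr⟩
      · obtain ⟨m, rfl⟩ : ∃ m, n = 2*m := ⟨r, by omega⟩
        have hm : 1 ≤ m := by omega
        have h1 := e_two_mul m hm
        have h2 := e_two_mul_add_one m hm
        have h3 := ih m (by omega) hm
        omega
      · obtain ⟨m, rfl⟩ : ∃ m, n = 2*m+1 := ⟨r, by omega⟩
        have hm : 1 ≤ m := by omega
        have h1 := e_two_mul_add_one m hm
        have h2 : e (2*m+1+1) = e (m+1) + 1 := by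
          rw [show 2*m+1+1 = 2*(m+1) by ring]
          exact e_two_mul (m+1) (by omega)
        have h3 := ih m (by omega) hm
        omega

lemma e_pow2 (n : ℕ) : e (2^n) = n := by
  induction n with
  | zero => exact e_one
  | succ n ih =>
    rw [show 2^(n+1) = 2*2^n by ring, e_two_mul (2^n) Nat.one_le_two_pow, ih]

/-- Partial sums of `e` over `range`. -/
noncomputable def A (m : ℕ) : ℕ := ∑ i ∈ Finset.range m, e i

/-- Sum of `max (e k) (e (k+1))` for `k < 2^n`. -/
noncomputable def T (n : ℕ) : ℕ := ∑ k ∈ Finset.range (2^n), max (e k) (e (k+1))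

lemma sum_two_mul (f : ℕ → ℕ) (m : ℕ) :
    ∑ i ∈ Finset.range (2*m), f i = ∑ j ∈ Finset.range m, (f (2*j) + f (2*j+1)) := by
  induction m with
  | zero => simp
  | succ m ih =>
    rw [Finset.sum_range_succ, ← ih, show 2*(m+1) = 2*m+1+1 by ring,
      Finset.sum_range_succ, Finset.sum_range_succ]
    ring

lemma A_shift (m : ℕ) : ∑ j ∈ Finset.range m, e (j+1) = A (m+1) := by
  rw [A, Finset.sum_range_succ', e_zero, add_zero]

lemma A_shift2 (m : ℕ) : ∑ j ∈ Finset.range m, e (j+2) = A (m+2) := by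
  rw [A, Finset.sum_range_succ', Finset.sum_range_succ', e_zero, e_one, add_zero, add_zero]

lemma A_succ_pow (n : ℕ) : A (2^n + 1) = A (2^n) + n := by
  rw [A, Finset.sum_range_succ, e_pow2, A]

lemma A_rec (n : ℕ) : A (2^(n+1)) + 1 = A (2^n) + 2^n + T n := by
  obtain ⟨K, hK⟩ : ∃ K, 2^n = K + 1 := ⟨2^n - 1, by have := Nat.one_le_two_pow (n := n); omega⟩
  have hL : A (2^(n+1)) = A (K+1) + K + T n := by
    rw [A, show 2^(n+1) = 2*2^n by ring, sum_two_mul, hK, Finset.sum_range_succ']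
    have h2 : ∀ j, e (2*(j+1)) + e (2*(j+1)+1)
        = (e (j+1) + max (e (j+1)) (e (j+1+1))) + 1 := by
      intro j
      rw [e_two_mul (j+1) (by omega), e_two_mul_add_one (j+1) (by omega)]
      ring
    rw [Finset.sum_congr rfl (fun j _ => h2 j), Finset.sum_add_distrib,
      Finset.sum_add_distrib, Finset.sum_const, Finset.card_range, smul_eq_mul, mul_one,
      A_shift]
    have hT : T n = ∑ j ∈ Finset.range K, max (e (j+1)) (e (j+1+1)) := by
      rw [T, hK, Finset.sum_range_succ', e_zero, e_one]
      simp
    rw [hT]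
    simp [e_zero, e_one, mul_zero]
    ring
  have hApow : A (2^n) = A (K+1) := by rw [hK]
  omega

lemma T_rec (n : ℕ) : T (n+1) + 1 = 2 * A (2^n) + n + 2^(n+1) := by
  obtain ⟨K, hK⟩ : ∃ K, 2^n = K + 1 := ⟨2^n - 1, by have := Nat.one_le_two_pow (n := n); omega⟩
  have e2 : e 2 = 1 := by have h := e_two_mul 1 le_rfl; norm_num [e_one] at h; exact h
  have hL : T (n+1) = (A (K+1) + (A (K+2))) + 2*K + 1 := by
    rw [T, show 2^(n+1) = 2*2^n by ring,
      sum_two_mul (fun k => max (e k) (e (k+1))), hK, Finset.sum_range_succ']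
    have h2 : ∀ j, (max (e (2*(j+1))) (e (2*(j+1)+1)) + max (e (2*(j+1)+1)) (e (2*(j+1)+1+1)))
        = (e (j+1) + e (j+2)) + 2 := by
      intro j
      have hd1 : e (j+2) ≤ e (j+1) + 1 ∧ e (j+1) ≤ e (j+2) + 1 := e_diff (j+1) (by omega)
      have ha : e (2*(j+1)) = e (j+1) + 1 := e_two_mul (j+1) (by omega)
      have hb : e (2*(j+1)+1) = max (e (j+1)) (e (j+2)) := e_two_mul_add_one (j+1) (by omega)
      have hc : e (2*(j+1)+1+1) = e (j+2) + 1 := by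
        rw [show 2*(j+1)+1+1 = 2*(j+2) by ring]
        exact e_two_mul (j+2) (by omega)
      omega
    rw [Finset.sum_congr rfl (fun j _ => h2 j), Finset.sum_add_distrib,
      Finset.sum_add_distrib, Finset.sum_const, Finset.card_range, smul_eq_mul,
      A_shift, A_shift2]
    have h0 : max (e (2*0)) (e (2*0+1)) + max (e (2*0+1)) (e (2*0+1+1)) = 1 := by
      norm_num [e_zero, e_one, e2]
    rw [h0]
    ring
  have hA2 : A (K+2) = A (K+1) + n := by
    have h := A_succ_pow n
    rw [hK] at h
    exact h
  have hApow : A (2^n) = A (K+1) := by rw [hK]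
  have hpow : 2^(n+1) = 2*(K+1) := by rw [pow_succ, hK]; ring
  omega

lemma main_pair (n : ℕ) :
    36*(A (2^n) : ℤ) = (6*n-7)*2^(n+2) - 18*n + 27 + (-1)^n ∧
    36*(T n : ℤ) = (6*n-4)*2^(n+2) - 2*(-1)^n + 18 := by
  induction n with
  | zero =>
    constructor <;> norm_num [A, T, e_zero, e_one]
  | succ n ih =>
    obtain ⟨ih1, ih2⟩ := ih
    have hA := A_rec n
    have hT := T_rec n
    have hA' : (A (2^(n+1)) : ℤ) + 1 = (A (2^n) : ℤ) + 2^n + (T n : ℤ) := by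
      exact_mod_cast congrArg (Nat.cast : ℕ → ℤ) hA
    have hT' : (T (n+1) : ℤ) + 1 = 2 * (A (2^n) : ℤ) + n + 2^(n+1) := by
      exact_mod_cast congrArg (Nat.cast : ℕ → ℤ) hT
    constructor
    · push_cast
      linear_combination 36 * hA' + ih1 + ih2
    · push_cast
      linear_combination 36 * hT' + 2 * ih1

theorem stern_degree_sum (n : ℕ) (hn : 1 ≤ n) :
    (36 : ℤ) * ∑ i ∈ Finset.Icc 1 (2 ^ n), (e i : ℤ) =
      (6 * n - 7) * 2 ^ (n + 2) + 18 * n + 27 + (-1) ^ n := by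
  have hs : ∑ i ∈ Finset.Icc 1 (2^n), e i = A (2^n) + n := by
    have h1 : Finset.Icc 1 (2^n) = Finset.Ico 1 (2^n+1) := by
      rw [Finset.Ico_add_one_right_eq_Icc]
    rw [h1, Finset.sum_Ico_eq_sum_range]
    simp only [Nat.add_sub_cancel]
    rw [Finset.sum_congr rfl (fun j _ => by rw [Nat.add_comm 1 j]), A_shift, A_succ_pow]
  have hs' : ∑ i ∈ Finset.Icc 1 (2^n), (e i : ℤ) = (A (2^n) : ℤ) + n := by
    rw [← Nat.cast_sum, hs]
    push_cast
    ring
  rw [hs']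
  linear_combination (main_pair n).1
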